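/- For the curve α(s) = ((sin s + s)/2, (cos s)/√2, (sin s - s)/2, c) in ℝ⁴ (c a constant), the tangent T(s) = α'(s) = (cos²(s/2), -(sin s)/√2, (cos s - 1)/2, 0) satisfies ‖T(s)‖ = 1 and ‖T'(s)‖ = 1/√2 for all s, i.e. the first Frenet curvature is the constant 1/√2. -/

import Mathlib

noncomputable abbrev stmtL : (Fin 4 → ℝ) →L[ℝ] EuclideanSpace ℝ (Fin 4) :=
  ((PiLp.continuousLinearEquiv 2 ℝ (fun _ : Fin 4 => ℝ)).symm : (Fin 4 → ℝ) →L[ℝ] _)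

theorem stmt18 (c : ℝ) (α : ℝ → EuclideanSpace ℝ (Fin 4))
    (hα : α = fun s => (WithLp.equiv 2 (Fin 4 → ℝ)).symm
      ![(Real.sin s + s) / 2, Real.cos s / Real.sqrt 2, (Real.sin s - s) / 2, c]) :
    ∀ s : ℝ,
      deriv α s = (WithLp.equiv 2 (Fin 4 → ℝ)).symm
        ![Real.cos (s / 2) ^ 2, -Real.sin s / Real.sqrt 2, (Real.cos s - 1) / 2, 0] ∧
      ‖deriv α s‖ = 1 ∧ ‖deriv (deriv α) s‖ = 1 / Real.sqrt 2 := by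
  have h2 : Real.sqrt 2 ≠ 0 := by positivity
  have hsq : Real.sqrt 2 ^ 2 = 2 := Real.sq_sqrt (by norm_num)
  have hT : ∀ t : ℝ, HasDerivAt α ((WithLp.equiv 2 (Fin 4 → ℝ)).symm
      ![(Real.cos t + 1) / 2, -Real.sin t / Real.sqrt 2, (Real.cos t - 1) / 2, 0]) t := by
    intro t
    have hf : HasDerivAt
        (fun s : ℝ => ![(Real.sin s + s) / 2, Real.cos s / Real.sqrt 2, (Real.sin s - s) / 2, c])
        ![(Real.cos t + 1) / 2, -Real.sin t / Real.sqrt 2, (Real.cos t - 1) / 2, 0] t := by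
      rw [hasDerivAt_pi]
      intro i
      fin_cases i <;> simp only [Matrix.cons_val_zero, Matrix.cons_val_one, Matrix.head_cons,
        Matrix.cons_val_two, Matrix.tail_cons, Matrix.cons_val_three]
      · exact ((Real.hasDerivAt_sin t).add (hasDerivAt_id t)).div_const 2
      · exact (Real.hasDerivAt_cos t).div_const _
      · exact ((Real.hasDerivAt_sin t).sub (hasDerivAt_id t)).div_const 2
      · exact hasDerivAt_const t c
    have := stmtL.hasFDerivAt.comp_hasDerivAt t hf
    rw [hα]; exact this
  have hT' : ∀ t : ℝ, HasDerivAt (deriv α) ((WithLp.equiv 2 (Fin 4 → ℝ)).symm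
      ![-Real.sin t / 2, -Real.cos t / Real.sqrt 2, -Real.sin t / 2, 0]) t := by
    have hd : deriv α = fun t => (WithLp.equiv 2 (Fin 4 → ℝ)).symm
        ![(Real.cos t + 1) / 2, -Real.sin t / Real.sqrt 2, (Real.cos t - 1) / 2, 0] := by
      funext t; exact (hT t).deriv
    intro t
    have hf : HasDerivAt
        (fun s : ℝ => ![(Real.cos s + 1) / 2, -Real.sin s / Real.sqrt 2, (Real.cos s - 1) / 2,
          (0 : ℝ)])
        ![-Real.sin t / 2, -Real.cos t / Real.sqrt 2, -Real.sin t / 2, 0] t := by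
      rw [hasDerivAt_pi]
      intro i
      fin_cases i <;> simp only [Matrix.cons_val_zero, Matrix.cons_val_one, Matrix.head_cons,
        Matrix.cons_val_two, Matrix.tail_cons, Matrix.cons_val_three]
      · simpa using ((Real.hasDerivAt_cos t).add (hasDerivAt_const t 1)).div_const 2
      · simpa using ((Real.hasDerivAt_sin t).neg).div_const (Real.sqrt 2)
      · simpa using ((Real.hasDerivAt_cos t).sub (hasDerivAt_const t 1)).div_const 2
      · exact hasDerivAt_const t 0
    have := stmtL.hasFDerivAt.comp_hasDerivAt t hf
    rw [hd]; exact this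
  intro s
  have hds : deriv α s = (WithLp.equiv 2 (Fin 4 → ℝ)).symm
      ![(Real.cos s + 1) / 2, -Real.sin s / Real.sqrt 2, (Real.cos s - 1) / 2, 0] := (hT s).deriv
  have hcos : Real.cos (s / 2) ^ 2 = (Real.cos s + 1) / 2 := by
    have := Real.cos_sq (s / 2)
    rw [show 2 * (s / 2) = s by ring] at this
    linarith
  refine ⟨?_, ?_, ?_⟩
  · rw [hds, hcos]
  · rw [hds, EuclideanSpace.norm_eq]
    have h1 : Real.sin s ^ 2 + Real.cos s ^ 2 = 1 := Real.sin_sq_add_cos_sq s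
    rw [show (1 : ℝ) = Real.sqrt 1 from (Real.sqrt_one).symm]
    congr 1
    simp [Fin.sum_univ_four, Real.norm_eq_abs, sq_abs, div_pow, hsq]
    nlinarith [h1]
  · rw [(hT' s).deriv, EuclideanSpace.norm_eq]
    have h1 : Real.sin s ^ 2 + Real.cos s ^ 2 = 1 := Real.sin_sq_add_cos_sq s
    rw [show (1 : ℝ) / Real.sqrt 2 = Real.sqrt (1 / 2) by
      rw [show (1 : ℝ) / 2 = 2⁻¹ by norm_num, Real.sqrt_inv, one_div]]
    congr 1
    simp [Fin.sum_univ_four, Real.norm_eq_abs, sq_abs, div_pow, hsq]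
    nlinarith [h1]
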